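/- Let m ≥ 1 and 2 ≤ k ≤ m be integers. Let 𝒳 be a nonempty compact subset of ℝ^m contained in a finite union of affine subspaces of ℝ^m, each of dimension m − k, and let ρ be a map of class C¹ on the open set ℝ^m ∖ 𝒳 with values in ℝ^m, satisfying ‖Dρ(z)‖ ≤ C₀ / dist(z, 𝒳) for every z ∈ ℝ^m ∖ 𝒳 and some constant C₀ > 0. Then for every R > 0 one has ∫_{B_R^m ∖ 𝒳} ‖Dρ(z)‖^{k−1} dz < +∞; in other words, ‖Dρ‖^{k−1} is locally integrable on ℝ^m (extending it by 0 on 𝒳). -/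

import Mathlib

open MeasureTheory Metric Set Module
open scoped ENNReal

section Aux

private lemma det_prodMap_aux {M₁ M₂ : Type*} [AddCommGroup M₁] [AddCommGroup M₂]
    [Module ℝ M₁] [Module ℝ M₂] [FiniteDimensional ℝ M₁] [FiniteDimensional ℝ M₂]
    (f : M₁ →ₗ[ℝ] M₁) (g : M₂ →ₗ[ℝ] M₂) :
    LinearMap.det (f.prodMap g) = LinearMap.det f * LinearMap.det g := by
  classical
  let b₁ := Module.finBasis ℝ M₁
  let b₂ := Module.finBasis ℝ M₂
  rw [← LinearMap.det_toMatrix (b₁.prod b₂), LinearMap.toMatrix_prodMap b₁ b₂ f g,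
    Matrix.det_fromBlocks_zero₂₁, LinearMap.det_toMatrix, LinearMap.det_toMatrix]

variable {F : Type*} [NormedAddCommGroup F] [InnerProductSpace ℝ F] [FiniteDimensional ℝ F]

private lemma det_interpolate (W : Submodule ℝ F) (ε : ℝ) :
    LinearMap.det
      ((W.subtype ∘ₗ (Submodule.orthogonalProjectionOnto W : F →ₗ[ℝ] W))
        + ε • (LinearMap.id - W.subtype ∘ₗ (Submodule.orthogonalProjectionOnto W : F →ₗ[ℝ] W)))
      = ε ^ Module.finrank ℝ Wᗮ := by
  set P : F →ₗ[ℝ] F := W.subtype ∘ₗ (Submodule.orthogonalProjectionOnto W : F →ₗ[ℝ] W) with hPdef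
  set L : F →ₗ[ℝ] F := P + ε • (LinearMap.id - P) with hLdef
  have hcompl : IsCompl W Wᗮ := W.isCompl_orthogonal
  set e := Submodule.prodEquivOfIsCompl W Wᗮ hcompl with hedef
  set D : (W × Wᗮ) →ₗ[ℝ] (W × Wᗮ) := LinearMap.prodMap LinearMap.id (ε • LinearMap.id)
    with hDdef
  have hPW : ∀ w : W, P (w : F) = w := fun w => by
    simp [hPdef, Submodule.orthogonalProjection_mem_subspace_eq_self]
  have hPWperp : ∀ w : Wᗮ, P (w : F) = 0 := fun w => by
    simp [hPdef, Submodule.orthogonalProjectionOnto_apply_of_mem_orthogonal w.2]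
  have key : ∀ pq : W × Wᗮ, L (e pq) = e (D pq) := by
    rintro ⟨w, w'⟩
    have he : ∀ pq : W × Wᗮ, e pq = (pq.1 : F) + (pq.2 : F) := fun pq =>
      Submodule.coe_prodEquivOfIsCompl' W Wᗮ hcompl pq
    rw [he ⟨w, w'⟩, he _]
    simp only [hLdef, hDdef, LinearMap.add_apply, LinearMap.smul_apply, LinearMap.sub_apply,
      LinearMap.id_apply, LinearMap.prodMap_apply, Prod.map_apply]
    rw [map_add P, hPW w, hPWperp w']
    simp only [add_zero, Submodule.coe_smul, smul_sub, LinearMap.smul_apply, LinearMap.id_apply]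
    abel_nf
    module
  have hL : L = (e : (W × Wᗮ) →ₗ[ℝ] F) ∘ₗ D ∘ₗ (e.symm : F →ₗ[ℝ] (W × Wᗮ)) := by
    apply LinearMap.ext
    intro x
    have := key (e.symm x)
    rw [e.apply_symm_apply] at this
    simpa using this
  rw [hL, LinearMap.det_conj, det_prodMap_aux, LinearMap.det_id, one_mul,
    LinearMap.det_smul, LinearMap.det_id, mul_one]

variable [MeasurableSpace F] [BorelSpace F] (μ : Measure F) [μ.IsAddHaarMeasure]

private lemma tube_vol (V : AffineSubspace ℝ F) {p : F} (hp : p ∈ V) {ε R : ℝ}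
    (hε : 0 < ε) (hε1 : ε ≤ 1) :
    μ (ball (0 : F) R ∩ {z | infDist z (V : Set F) ≤ ε})
      ≤ ENNReal.ofReal (ε ^ Module.finrank ℝ (V.direction)ᗮ)
          * μ (ball (0 : F) (R + ‖p‖ + 1)) := by
  set W := V.direction with hWdef
  set P : F →ₗ[ℝ] F := W.subtype ∘ₗ (Submodule.orthogonalProjectionOnto W : F →ₗ[ℝ] W) with hPdef
  set L : F →ₗ[ℝ] F := P + ε • (LinearMap.id - P) with hLdef
  have hVne : (V : Set F).Nonempty := ⟨p, hp⟩
  have : Nonempty (V : Set F) := hVne.to_subtype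
  have hsub : ball (0 : F) R ∩ {z | infDist z (V : Set F) ≤ ε}
      ⊆ (fun x => p + x) '' (L '' ball (0 : F) (R + ‖p‖ + 1)) := by
    rintro z ⟨hzball, hzd⟩
    set w : F := (Submodule.orthogonalProjectionOnto W (z - p) : F) with hwdef
    set w' : F := z - p - w with hw'def
    have hww : w ∈ W := (Submodule.orthogonalProjectionOnto W (z - p)).2
    have hw' : w' ∈ Wᗮ := W.sub_starProjection_mem_orthogonal (z - p)
    -- ‖w'‖ ≤ ε
    have hw'le : ‖w'‖ ≤ ε := by
      refine le_trans ?_ hzd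
      rw [infDist_eq_iInf]
      refine le_ciInf fun y => ?_
      have hyW : (y : F) - p ∈ W := by
        rw [hWdef]
        simpa [vsub_eq_sub] using AffineSubspace.vsub_mem_direction y.2 hp
      have h2 : Submodule.orthogonalProjectionOnto Wᗮ ((y : F) - p) = 0 :=
        Submodule.orthogonalProjectionOnto_apply_of_mem_orthogonal
          (W.le_orthogonal_orthogonal hyW)
      have hproj0 : Submodule.orthogonalProjectionOnto Wᗮ (z - (y : F))
          = Submodule.orthogonalProjectionOnto Wᗮ (z - p) := by
        have h1 : z - (y : F) = (z - p) - ((y : F) - p) := by abel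
        rw [h1, map_sub, h2, sub_zero]
      have hproj : (Submodule.orthogonalProjectionOnto Wᗮ (z - (y : F)) : F) = w' := by
        rw [hproj0]; exact Submodule.starProjection_orthogonal_val (K := W) (z - p)
      calc ‖w'‖ = ‖(Submodule.orthogonalProjectionOnto Wᗮ (z - (y : F)) : F)‖ := by rw [hproj]
        _ = ‖Submodule.orthogonalProjectionOnto Wᗮ (z - (y : F))‖ := rfl
        _ ≤ ‖Submodule.orthogonalProjectionOnto Wᗮ‖ * ‖z - (y : F)‖ :=
            (Submodule.orthogonalProjectionOnto Wᗮ).le_opNorm _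
        _ ≤ 1 * ‖z - (y : F)‖ :=
            mul_le_mul_of_nonneg_right (Submodule.orthogonalProjectionOnto_norm_le _) (norm_nonneg _)
        _ = dist z (y : F) := by rw [one_mul, dist_eq_norm]
    have hwle : ‖w‖ ≤ ‖z - p‖ := by
      calc ‖w‖ = ‖Submodule.orthogonalProjectionOnto W (z - p)‖ := rfl
        _ ≤ ‖Submodule.orthogonalProjectionOnto W‖ * ‖z - p‖ := (Submodule.orthogonalProjectionOnto W).le_opNorm _
        _ ≤ 1 * ‖z - p‖ :=
            mul_le_mul_of_nonneg_right (Submodule.orthogonalProjectionOnto_norm_le _) (norm_nonneg _)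
        _ = ‖z - p‖ := one_mul _
    set u : F := w + ε⁻¹ • w' with hudef
    have hPw : P w = w := by
      simp [hPdef, Submodule.starProjection_eq_self_iff.mpr hww]
    have hPw' : P w' = 0 := by
      simp [hPdef, Submodule.orthogonalProjectionOnto_apply_of_mem_orthogonal hw']
    have hLu : L u = z - p := by
      have hPu : P u = w := by
        rw [hudef, map_add, hPw, _root_.map_smul, hPw', smul_zero, add_zero]
      have h4 : L u = w + ε • (u - w) := by
        simp only [hLdef, LinearMap.add_apply, LinearMap.smul_apply, LinearMap.sub_apply,
          LinearMap.id_apply, hPu]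
      have h3 : u - w = ε⁻¹ • w' := by rw [hudef]; abel
      rw [h4, h3, smul_smul, mul_inv_cancel₀ hε.ne', one_smul, hw'def]
      abel
    refine ⟨L u, ⟨u, ?_, rfl⟩, by rw [hLu]; module⟩
    rw [mem_ball_zero_iff]
    have hz : ‖z‖ < R := by rwa [mem_ball_zero_iff] at hzball
    have hzp : ‖z - p‖ ≤ ‖z‖ + ‖p‖ := norm_sub_le _ _
    calc ‖u‖ ≤ ‖w‖ + ‖ε⁻¹ • w'‖ := norm_add_le _ _
      _ = ‖w‖ + ε⁻¹ * ‖w'‖ := by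
          rw [norm_smul, Real.norm_eq_abs, abs_of_pos (by positivity)]
      _ ≤ ‖z - p‖ + ε⁻¹ * ε := by gcongr
      _ = ‖z - p‖ + 1 := by rw [inv_mul_cancel₀ hε.ne']
      _ < R + ‖p‖ + 1 := by linarith
  calc μ (ball (0 : F) R ∩ {z | infDist z (V : Set F) ≤ ε})
      ≤ μ ((fun x => p + x) '' (L '' ball (0 : F) (R + ‖p‖ + 1))) := measure_mono hsub
    _ = μ (L '' ball (0 : F) (R + ‖p‖ + 1)) := by
        rw [Set.image_add_left, measure_preimage_add]
    _ = ENNReal.ofReal |LinearMap.det L| * μ (ball (0 : F) (R + ‖p‖ + 1)) :=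
        μ.addHaar_image_linearMap L _
    _ = ENNReal.ofReal (ε ^ Module.finrank ℝ (V.direction)ᗮ)
          * μ (ball (0 : F) (R + ‖p‖ + 1)) := by
        rw [hLdef, hPdef, det_interpolate W ε, abs_of_nonneg (by positivity)]

end Aux

private lemma key_integral (m k : ℕ) (hk2 : 2 ≤ k) (hkm : k ≤ m)
    (V : AffineSubspace ℝ (EuclideanSpace ℝ (Fin m))) (hne : (V : Set (EuclideanSpace ℝ (Fin m))).Nonempty)
    (hdim : Module.finrank ℝ V.direction = m - k) (R : ℝ) :
    ∫⁻ z in ball (0 : EuclideanSpace ℝ (Fin m)) R,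
      ((ENNReal.ofReal (infDist z (V : Set (EuclideanSpace ℝ (Fin m)))))⁻¹) ^ (k - 1) < ⊤ := by
  classical
  obtain ⟨p, hp⟩ := hne
  have : Nonempty (V : Set (EuclideanSpace ℝ (Fin m))) := ⟨p, hp⟩
  set n := k - 1 with hndef
  have hn1 : 1 ≤ n := by omega
  have hn0 : (0 : ℝ) < n := by exact_mod_cast Nat.pos_of_ne_zero (by omega)
  -- V is a proper affine subspace, hence closed and null
  have hVtop : V ≠ ⊤ := by
    intro h
    rw [h, AffineSubspace.direction_top, finrank_top, finrank_euclideanSpace_fin] at hdim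
    omega
  have hVclosed : IsClosed (V : Set (EuclideanSpace ℝ (Fin m))) := V.closed_of_finiteDimensional
  have hVnull : volume (V : Set (EuclideanSpace ℝ (Fin m))) = 0 := Measure.addHaar_affineSubspace volume V hVtop
  -- replace the ℝ≥0∞-valued integrand by `ofReal` of a real function, a.e.
  set φ : EuclideanSpace ℝ (Fin m) → ℝ := fun z => (infDist z (V : Set (EuclideanSpace ℝ (Fin m))))⁻¹ ^ n with hφdef
  have hae : ∀ᵐ z ∂(volume.restrict (ball (0 : EuclideanSpace ℝ (Fin m)) R)),
      ((ENNReal.ofReal (infDist z (V : Set (EuclideanSpace ℝ (Fin m)))))⁻¹) ^ n = ENNReal.ofReal (φ z) := by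
    refine ae_restrict_of_ae ?_
    have hsub : {z : EuclideanSpace ℝ (Fin m) | ¬ ((ENNReal.ofReal (infDist z (V : Set (EuclideanSpace ℝ (Fin m)))))⁻¹) ^ n
        = ENNReal.ofReal (φ z)} ⊆ (V : Set (EuclideanSpace ℝ (Fin m))) := by
      intro z hz
      by_contra hzV
      apply hz
      have hd : 0 < infDist z (V : Set (EuclideanSpace ℝ (Fin m))) :=
        (hVclosed.notMem_iff_infDist_pos ⟨p, hp⟩).mp hzV
      rw [hφdef]
      rw [ENNReal.ofReal_pow (by positivity), ENNReal.ofReal_inv_of_pos hd]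
    exact measure_mono_null hsub hVnull
  rw [lintegral_congr_ae hae]
  -- layer cake
  have hφmeas : Measurable φ :=
    ((continuous_infDist_pt (V : Set (EuclideanSpace ℝ (Fin m)))).measurable.inv).pow_const n
  have hφnn : 0 ≤ᵐ[volume.restrict (ball (0 : EuclideanSpace ℝ (Fin m)) R)] φ :=
    Filter.Eventually.of_forall fun z => by
      have h := infDist_nonneg (s := (V : Set (EuclideanSpace ℝ (Fin m)))) (x := z)
      positivity
  rw [lintegral_eq_lintegral_meas_le _ hφnn hφmeas.aemeasurable]
  -- compute `finrank Wᗮ = k`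
  have hperp : Module.finrank ℝ (V.direction)ᗮ = k := by
    have := Submodule.finrank_add_finrank_orthogonal (K := V.direction)
    rw [hdim, finrank_euclideanSpace_fin] at this
    omega
  set c := volume (ball (0 : EuclideanSpace ℝ (Fin m)) (R + ‖p‖ + 1)) with hcdef
  have hcfin : c ≠ ⊤ := measure_ball_lt_top.ne
  -- split the time integral
  calc ∫⁻ t in Ioi (0 : ℝ), (volume.restrict (ball (0 : EuclideanSpace ℝ (Fin m)) R)) {a | t ≤ φ a}
      ≤ ∫⁻ t in Ioc (0 : ℝ) 1 ∪ Ioi 1, (volume.restrict (ball (0 : EuclideanSpace ℝ (Fin m)) R)) {a | t ≤ φ a} :=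
        lintegral_mono_set Ioi_subset_Ioc_union_Ioi
    _ ≤ (∫⁻ t in Ioc (0 : ℝ) 1, (volume.restrict (ball (0 : EuclideanSpace ℝ (Fin m)) R)) {a | t ≤ φ a})
          + ∫⁻ t in Ioi (1 : ℝ), (volume.restrict (ball (0 : EuclideanSpace ℝ (Fin m)) R)) {a | t ≤ φ a} :=
        lintegral_union_le _ _ _
    _ < ⊤ := by
        refine ENNReal.add_lt_top.2 ⟨?_, ?_⟩
        · -- near 0 : bounded by the volume of the ball
          have hb : ∀ t : ℝ, (volume.restrict (ball (0 : EuclideanSpace ℝ (Fin m)) R)) {a | t ≤ φ a}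
              ≤ volume (ball (0 : EuclideanSpace ℝ (Fin m)) R) := fun t => by
            rw [← Measure.restrict_apply_univ (μ := volume) (s := ball (0 : EuclideanSpace ℝ (Fin m)) R)]
            exact measure_mono (subset_univ _)
          calc (∫⁻ t in Ioc (0 : ℝ) 1, (volume.restrict (ball (0 : EuclideanSpace ℝ (Fin m)) R)) {a | t ≤ φ a})
              ≤ ∫⁻ _ in Ioc (0 : ℝ) 1, volume (ball (0 : EuclideanSpace ℝ (Fin m)) R) :=
                setLIntegral_mono' measurableSet_Ioc fun t _ => hb t
            _ = volume (ball (0 : EuclideanSpace ℝ (Fin m)) R) * volume (Ioc (0 : ℝ) 1) := setLIntegral_const _ _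
            _ < ⊤ := by
                refine ENNReal.mul_lt_top measure_ball_lt_top ?_
                rw [Real.volume_Ioc]
                exact ENNReal.ofReal_lt_top
        · -- tail: use the tube volume estimate
          have hpt : ∀ t ∈ Ioi (1 : ℝ),
              (volume.restrict (ball (0 : EuclideanSpace ℝ (Fin m)) R)) {a | t ≤ φ a}
                ≤ ENNReal.ofReal (t ^ (-((k : ℝ) / n))) * c := by
            intro t ht
            rw [mem_Ioi] at ht
            have ht0 : (0 : ℝ) < t := lt_trans one_pos ht
            set ε := t ^ (-(1 / (n : ℝ))) with hεdef
            have hε : 0 < ε := Real.rpow_pos_of_pos ht0 _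
            have hε1 : ε ≤ 1 :=
              Real.rpow_le_one_of_one_le_of_nonpos ht.le (neg_nonpos.mpr (by positivity))
            have hsub2 : {a : EuclideanSpace ℝ (Fin m) | t ≤ φ a} ∩ ball (0 : EuclideanSpace ℝ (Fin m)) R
                ⊆ ball (0 : EuclideanSpace ℝ (Fin m)) R ∩ {z | infDist z (V : Set (EuclideanSpace ℝ (Fin m))) ≤ ε} := by
              rintro a ⟨ha, haball⟩
              refine ⟨haball, ?_⟩
              rw [mem_setOf_eq] at ha ⊢
              set d := infDist a (V : Set (EuclideanSpace ℝ (Fin m))) with hddef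
              have hd0 : 0 ≤ d := infDist_nonneg
              have hd : 0 < d := by
                rcases hd0.lt_or_eq with h | h
                · exact h
                · exfalso
                  rw [hφdef] at ha
                  simp only [← hddef, ← h, inv_zero] at ha
                  rw [zero_pow (by omega)] at ha
                  linarith
              have hdn : d ^ n ≤ t⁻¹ := by
                rw [hφdef] at ha
                simp only [← hddef, inv_pow] at ha
                have hdn0 : 0 < d ^ n := by positivity
                calc d ^ n = ((d ^ n)⁻¹)⁻¹ := by rw [inv_inv]
                  _ ≤ t⁻¹ := by gcongr
              calc d = (d ^ (n : ℝ)) ^ ((n : ℝ)⁻¹) := by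
                    rw [← Real.rpow_mul hd0, mul_inv_cancel₀ hn0.ne', Real.rpow_one]
                _ ≤ (t⁻¹) ^ ((n : ℝ)⁻¹) := by
                    apply Real.rpow_le_rpow (by positivity) ?_ (by positivity)
                    rwa [Real.rpow_natCast]
                _ = ε := by
                    rw [hεdef, ← Real.rpow_neg_one t, ← Real.rpow_mul ht0.le]
                    norm_num
            calc (volume.restrict (ball (0 : EuclideanSpace ℝ (Fin m)) R)) {a | t ≤ φ a}
                = volume ({a : EuclideanSpace ℝ (Fin m) | t ≤ φ a} ∩ ball (0 : EuclideanSpace ℝ (Fin m)) R) :=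
                  Measure.restrict_apply' measurableSet_ball
              _ ≤ volume (ball (0 : EuclideanSpace ℝ (Fin m)) R ∩ {z | infDist z (V : Set (EuclideanSpace ℝ (Fin m))) ≤ ε}) :=
                  measure_mono hsub2
              _ ≤ ENNReal.ofReal (ε ^ Module.finrank ℝ (V.direction)ᗮ) * c :=
                  tube_vol volume V hp hε hε1
              _ = ENNReal.ofReal (t ^ (-((k : ℝ) / n))) * c := by
                  congr 2
                  rw [hperp, hεdef, ← Real.rpow_natCast (t ^ (-(1 / (n : ℝ)))) k,
                    ← Real.rpow_mul ht0.le]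
                  congr 1
                  field_simp
          calc (∫⁻ t in Ioi (1 : ℝ), (volume.restrict (ball (0 : EuclideanSpace ℝ (Fin m)) R)) {a | t ≤ φ a})
              ≤ ∫⁻ t in Ioi (1 : ℝ), ENNReal.ofReal (t ^ (-((k : ℝ) / n))) * c :=
                setLIntegral_mono' measurableSet_Ioi hpt
            _ = (∫⁻ t in Ioi (1 : ℝ), ENNReal.ofReal (t ^ (-((k : ℝ) / n)))) * c :=
                lintegral_mul_const' c _ hcfin
            _ < ⊤ := by
                refine ENNReal.mul_lt_top ?_ hcfin.lt_top
                refine IntegrableOn.setLIntegral_lt_top ?_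
                refine integrableOn_Ioi_rpow_of_lt ?_ one_pos
                rw [neg_lt_neg_iff]
                rw [lt_div_iff₀ hn0]
                have : (n : ℝ) < k := by exact_mod_cast (by omega : n < k)
                linarith

/-- If `𝒳 ⊆ ℝ^m` is a nonempty compact set contained in a finite union of affine
subspaces of dimension `m - k`, and `ρ` is `C¹` on `ℝ^m ∖ 𝒳` with
`‖Dρ(z)‖ ≤ C₀ / dist(z, 𝒳)`, then `‖Dρ‖^{k-1}` is locally integrable on `ℝ^m`. -/
theorem fderiv_retraction_pow_locally_integrable (m k : ℕ) (hm : 1 ≤ m)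
    (hk2 : 2 ≤ k) (hkm : k ≤ m)
    (𝒳 : Set (EuclideanSpace ℝ (Fin m))) (h𝒳ne : 𝒳.Nonempty) (h𝒳c : IsCompact 𝒳)
    (n : ℕ) (Vs : Fin n → AffineSubspace ℝ (EuclideanSpace ℝ (Fin m)))
    (hVne : ∀ i, (Vs i : Set (EuclideanSpace ℝ (Fin m))).Nonempty)
    (hVdim : ∀ i, Module.finrank ℝ (Vs i).direction = m - k)
    (h𝒳sub : 𝒳 ⊆ ⋃ i, (Vs i : Set (EuclideanSpace ℝ (Fin m))))
    (ρ : EuclideanSpace ℝ (Fin m) → EuclideanSpace ℝ (Fin m))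
    (hρ : ContDiffOn ℝ 1 ρ 𝒳ᶜ)
    (C₀ : ℝ) (hC₀ : 0 < C₀)
    (hDρ : ∀ z ∉ 𝒳, ‖fderiv ℝ ρ z‖ ≤ C₀ / Metric.infDist z 𝒳)
    (R : ℝ) (hR : 0 < R) :
    ∫⁻ z in Metric.ball (0 : EuclideanSpace ℝ (Fin m)) R \ 𝒳,
        ENNReal.ofReal (‖fderiv ℝ ρ z‖ ^ (k - 1))
      < ⊤ := by
  classical
  have hcl : IsClosed 𝒳 := h𝒳c.isClosed
  set Fi : Fin n → EuclideanSpace ℝ (Fin m) → ℝ≥0∞ :=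
    fun i z => ((ENNReal.ofReal (infDist z ((Vs i : Set (EuclideanSpace ℝ (Fin m))))))⁻¹) ^ (k - 1) with hFidef
  have hFimeas : ∀ i, Measurable (Fi i) := fun i =>
    (((continuous_infDist_pt ((Vs i : Set (EuclideanSpace ℝ (Fin m))))).measurable.ennreal_ofReal).inv).pow_const _
  set C : ℝ≥0∞ := ENNReal.ofReal (C₀ ^ (k - 1)) with hCdef
  have hpoint : ∀ z ∈ ball (0 : EuclideanSpace ℝ (Fin m)) R \ 𝒳,
      ENNReal.ofReal (‖fderiv ℝ ρ z‖ ^ (k - 1)) ≤ C * ∑ i, Fi i z := by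
    rintro z ⟨hzb, hz𝒳⟩
    have hd : 0 < infDist z 𝒳 := (hcl.notMem_iff_infDist_pos h𝒳ne).mp hz𝒳
    obtain ⟨a, ha, hda⟩ := h𝒳c.exists_infDist_eq_dist h𝒳ne z
    obtain ⟨i, hai⟩ : ∃ i, a ∈ (Vs i : Set (EuclideanSpace ℝ (Fin m))) := by simpa using h𝒳sub ha
    have hdi : infDist z ((Vs i : Set (EuclideanSpace ℝ (Fin m)))) ≤ infDist z 𝒳 := by
      rw [hda]; exact infDist_le_dist_of_mem hai
    have h1 : ‖fderiv ℝ ρ z‖ ^ (k - 1) ≤ (C₀ / infDist z 𝒳) ^ (k - 1) :=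
      pow_le_pow_left₀ (norm_nonneg _) (hDρ z hz𝒳) _
    calc ENNReal.ofReal (‖fderiv ℝ ρ z‖ ^ (k - 1))
        ≤ ENNReal.ofReal ((C₀ / infDist z 𝒳) ^ (k - 1)) := ENNReal.ofReal_le_ofReal h1
      _ = C * ((ENNReal.ofReal (infDist z 𝒳))⁻¹) ^ (k - 1) := by
          rw [div_pow, div_eq_mul_inv,
            ENNReal.ofReal_mul (by positivity : (0:ℝ) ≤ C₀ ^ (k - 1)),
            ENNReal.ofReal_inv_of_pos (pow_pos hd _), ENNReal.ofReal_pow hd.le,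
            ENNReal.inv_pow]
      _ ≤ C * Fi i z :=
          mul_le_mul_right
            (pow_le_pow_left' (ENNReal.inv_le_inv.mpr (ENNReal.ofReal_le_ofReal hdi)) _) C
      _ ≤ C * ∑ j, Fi j z := by
          gcongr
          exact Finset.single_le_sum (f := fun j => Fi j z) (fun j _ => zero_le)
            (Finset.mem_univ i)
  calc ∫⁻ z in ball (0 : EuclideanSpace ℝ (Fin m)) R \ 𝒳, ENNReal.ofReal (‖fderiv ℝ ρ z‖ ^ (k - 1))
      ≤ ∫⁻ z in ball (0 : EuclideanSpace ℝ (Fin m)) R \ 𝒳, C * ∑ i, Fi i z :=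
        setLIntegral_mono' (measurableSet_ball.diff hcl.measurableSet) hpoint
    _ ≤ ∫⁻ z in ball (0 : EuclideanSpace ℝ (Fin m)) R, C * ∑ i, Fi i z :=
        lintegral_mono_set diff_subset
    _ = C * ∑ i, ∫⁻ z in ball (0 : EuclideanSpace ℝ (Fin m)) R, Fi i z := by
        rw [lintegral_const_mul _ (by exact Finset.measurable_sum _ fun i _ => hFimeas i),
          lintegral_finset_sum _ fun i _ => hFimeas i]
    _ < ⊤ := by
        refine ENNReal.mul_lt_top ENNReal.ofReal_lt_top ?_
        refine ENNReal.sum_lt_top.mpr fun i _ => ?_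
        exact key_integral m k hk2 hkm (Vs i) (hVne i) (hVdim i) R
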